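/- arXiv:1412.1509 — 3 statements merged into one kernel-verified Lean document; each statement's English description precedes it below -/
import Mathlib

section
/- Let Ω ⊆ ℝ² be open and connected and let φ ∈ C²(Ω). Then the following are equivalent: (a) Δφ = −2 on Ω and the function ½|Dφ|² + φ is constant on Ω; (b) there exist constants u, v, k ∈ ℝ such that φ(ξ,η) = −½(ξ² + η²) + uξ + vη + k for all (ξ,η) ∈ Ω. In other words, the solutions of the self-similar potential flow system with constant density are exactly the uniform-state pseudo-potentials. -/
open Filter Topology ContinuousLinearMap

/- Partial derivatives of a function of the self-similar variables (ξ, η). -/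
noncomputable def pdxi (f : ℝ → ℝ → ℝ) (ξ η : ℝ) : ℝ := deriv (fun s => f s η) ξ
noncomputable def pdeta (f : ℝ → ℝ → ℝ) (ξ η : ℝ) : ℝ := deriv (fun s => f ξ s) η

/-- A function with zero derivative on an open preconnected set is constant there. -/
lemma my_const_of_fderiv_zero {E : Type*} [NormedAddCommGroup E] [NormedSpace ℝ E]
    {Ω : Set (ℝ × ℝ)} (hΩo : IsOpen Ω) (hΩc : IsPreconnected Ω)
    {g : ℝ × ℝ → E} (hg : ∀ x ∈ Ω, HasFDerivAt g (0 : ℝ × ℝ →L[ℝ] E) x)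
    {x y : ℝ × ℝ} (hx : x ∈ Ω) (hy : y ∈ Ω) : g x = g y := by
  haveI : PreconnectedSpace Ω := Subtype.preconnectedSpace hΩc
  set f : Ω → E := fun z => g z.1 with hf
  have hlc : IsLocallyConstant f := by
    rw [IsLocallyConstant.iff_exists_open]
    rintro ⟨z, hz⟩
    obtain ⟨ε, hε, hball⟩ := Metric.isOpen_iff.1 hΩo z hz
    refine ⟨Subtype.val ⁻¹' Metric.ball z ε, (Metric.isOpen_ball).preimage continuous_subtype_val,
      Metric.mem_ball_self hε, ?_⟩
    rintro ⟨w, hw⟩ hwb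
    have hconst : ∀ a ∈ Metric.ball z ε, ∀ b ∈ Metric.ball z ε, g a = g b := by
      intro a ha b hb
      refine (convex_ball z ε).is_const_of_fderivWithin_eq_zero (𝕜 := ℝ)
        (fun p hp => ((hg p (hball hp)).differentiableAt).differentiableWithinAt) ?_ ha hb
      intro p hp
      rw [fderivWithin_of_isOpen Metric.isOpen_ball hp]
      exact (hg p (hball hp)).fderiv
    exact hconst w (by simpa using hwb) z (Metric.mem_ball_self hε)
  exact hlc.apply_eq_of_isPreconnected isPreconnected_univ (x := ⟨x, hx⟩) (y := ⟨y, hy⟩)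
    trivial trivial

/-- slice derivative equals full derivative applied to basis vector -/
lemma my_pdxi_eq {f : ℝ → ℝ → ℝ} {x : ℝ × ℝ}
    (h : DifferentiableAt ℝ (fun q : ℝ × ℝ => f q.1 q.2) x) :
    deriv (fun s => f s x.2) x.1 = fderiv ℝ (fun q : ℝ × ℝ => f q.1 q.2) x (1, 0) := by
  have h1 : HasDerivAt (fun s : ℝ => (s, x.2)) ((1 : ℝ), (0 : ℝ)) x.1 :=
    (hasDerivAt_id x.1).prodMk (hasDerivAt_const x.1 x.2)
  have := (h.hasFDerivAt.comp_hasDerivAt x.1 h1)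
  exact this.deriv

lemma my_pdeta_eq {f : ℝ → ℝ → ℝ} {x : ℝ × ℝ}
    (h : DifferentiableAt ℝ (fun q : ℝ × ℝ => f q.1 q.2) x) :
    deriv (fun s => f x.1 s) x.2 = fderiv ℝ (fun q : ℝ × ℝ => f q.1 q.2) x (0, 1) := by
  have h1 : HasDerivAt (fun s : ℝ => (x.1, s)) ((0 : ℝ), (1 : ℝ)) x.2 :=
    (hasDerivAt_const x.2 x.1).prodMk (hasDerivAt_id x.2)
  exact (h.hasFDerivAt.comp_hasDerivAt x.2 h1).deriv


/-- decomposition of a continuous linear map on ℝ² along the standard basis. -/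
lemma my_clm_decomp {E : Type*} [NormedAddCommGroup E] [NormedSpace ℝ E]
    (L : ℝ × ℝ →L[ℝ] E) (w : ℝ × ℝ) :
    L w = w.1 • L (1, 0) + w.2 • L (0, 1) := by
  have hw : w = w.1 • ((1 : ℝ), (0 : ℝ)) + w.2 • ((0 : ℝ), (1 : ℝ)) := by
    ext <;> simp
  rw [← map_smul, ← map_smul, ← map_add, ← hw]

set_option maxHeartbeats 1000000 in
/-- Differentiated Bernoulli relation. -/
lemma my_bern {Ω : Set (ℝ × ℝ)} (hΩo : IsOpen Ω) {F : ℝ × ℝ → ℝ} {C : ℝ}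
    (hdiff : ∀ x ∈ Ω, DifferentiableAt ℝ F x)
    (hf'x : ∀ x ∈ Ω, HasFDerivAt (fderiv ℝ F) (fderiv ℝ (fderiv ℝ F) x) x)
    (hB : ∀ y ∈ Ω, (1/2 : ℝ) * (fderiv ℝ F y (1, 0) * fderiv ℝ F y (1, 0)
      + fderiv ℝ F y (0, 1) * fderiv ℝ F y (0, 1)) + F y = C)
    {x : ℝ × ℝ} (hx : x ∈ Ω) (w : ℝ × ℝ) :
    fderiv ℝ F x (1, 0) * fderiv ℝ (fderiv ℝ F) x w (1, 0)
      + fderiv ℝ F x (0, 1) * fderiv ℝ (fderiv ℝ F) x w (0, 1) + fderiv ℝ F x w = 0 := by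
  set f' : ℝ × ℝ → (ℝ × ℝ →L[ℝ] ℝ) := fderiv ℝ F with hf'def
  set L : ℝ × ℝ →L[ℝ] (ℝ × ℝ →L[ℝ] ℝ) := fderiv ℝ f' x with hLdef
  set Ap : (ℝ × ℝ) →L[ℝ] ℝ :=
    (ContinuousLinearMap.apply ℝ ℝ ((1 : ℝ), (0 : ℝ))).comp L with hApdef
  set Aq : (ℝ × ℝ) →L[ℝ] ℝ :=
    (ContinuousLinearMap.apply ℝ ℝ ((0 : ℝ), (1 : ℝ))).comp L with hAqdef
  have hp : HasFDerivAt (fun y => f' y (1, 0)) Ap x :=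
    (ContinuousLinearMap.apply ℝ ℝ ((1 : ℝ), (0 : ℝ))).hasFDerivAt.comp x (hf'x x hx)
  have hq : HasFDerivAt (fun y => f' y (0, 1)) Aq x :=
    (ContinuousLinearMap.apply ℝ ℝ ((0 : ℝ), (1 : ℝ))).hasFDerivAt.comp x (hf'x x hx)
  have hg : HasFDerivAt
      (fun y => (1/2 : ℝ) * (f' y (1, 0) * f' y (1, 0) + f' y (0, 1) * f' y (0, 1)) + F y)
      ((1/2 : ℝ) • ((f' x (1, 0) • Ap + f' x (1, 0) • Ap)
        + (f' x (0, 1) • Aq + f' x (0, 1) • Aq)) + f' x) x :=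
    (((hp.mul hp).add (hq.mul hq)).const_mul (1/2 : ℝ)).add (hdiff x hx).hasFDerivAt
  have hzero : HasFDerivAt
      (fun y => (1/2 : ℝ) * (f' y (1, 0) * f' y (1, 0) + f' y (0, 1) * f' y (0, 1)) + F y)
      (0 : ℝ × ℝ →L[ℝ] ℝ) x := by
    refine (hasFDerivAt_const C x).congr_of_eventuallyEq ?_
    exact eventually_of_mem (hΩo.mem_nhds hx) fun y hy => hB y hy
  have huniq := hg.unique hzero
  have hval := congrArg (fun (T : ℝ × ℝ →L[ℝ] ℝ) => T w) huniq
  simp only [ContinuousLinearMap.add_apply, ContinuousLinearMap.smul_apply,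
    ContinuousLinearMap.coe_comp', Function.comp_apply, ContinuousLinearMap.apply_apply,
    ContinuousLinearMap.zero_apply, smul_eq_mul, hApdef, hAqdef] at hval
  linarith [hval]

set_option maxHeartbeats 1000000 in
/-- The second derivative is everywhere equal to minus the identity bilinear form. -/
lemma my_snd_values {Ω : Set (ℝ × ℝ)} (hΩo : IsOpen Ω) {F : ℝ × ℝ → ℝ}
    (hdiff : ∀ x ∈ Ω, DifferentiableAt ℝ F x)
    (hf'x : ∀ x ∈ Ω, HasFDerivAt (fderiv ℝ F) (fderiv ℝ (fderiv ℝ F) x) x)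
    (hf''cont : ContinuousOn (fderiv ℝ (fderiv ℝ F)) Ω)
    (hLap' : ∀ x ∈ Ω, fderiv ℝ (fderiv ℝ F) x (1, 0) (1, 0)
      + fderiv ℝ (fderiv ℝ F) x (0, 1) (0, 1) = -2)
    (hBern : ∀ x ∈ Ω, ∀ w : ℝ × ℝ,
      fderiv ℝ F x (1, 0) * fderiv ℝ (fderiv ℝ F) x w (1, 0)
      + fderiv ℝ F x (0, 1) * fderiv ℝ (fderiv ℝ F) x w (0, 1) + fderiv ℝ F x w = 0)
    {x : ℝ × ℝ} (hx : x ∈ Ω) (w z : ℝ × ℝ) :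
    fderiv ℝ (fderiv ℝ F) x w z = -(w.1 * z.1 + w.2 * z.2) := by
  set f' : ℝ × ℝ → (ℝ × ℝ →L[ℝ] ℝ) := fderiv ℝ F with hf'def
  set f'' : ℝ × ℝ → (ℝ × ℝ →L[ℝ] (ℝ × ℝ →L[ℝ] ℝ)) := fderiv ℝ f' with hf''def
  have hsymm : ∀ y ∈ Ω, ∀ v w : ℝ × ℝ, f'' y v w = f'' y w v := by
    intro y hy v w
    exact second_derivative_symmetric_of_eventually
      (eventually_of_mem (hΩo.mem_nhds hy) fun z hz => (hdiff z hz).hasFDerivAt)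
      (hf'x y hy) v w
  -- key pointwise values
  have hkey : ∀ y ∈ Ω, f'' y (1, 0) (1, 0) = -1 ∧ f'' y (1, 0) (0, 1) = 0 := by
    intro y hy
    by_contra hcon
    have hhy : (f'' y (1, 0) (1, 0) + 1)^2 + (f'' y (1, 0) (0, 1))^2 ≠ 0 := by
      intro h0
      apply hcon
      have e1 : (f'' y (1, 0) (1, 0) + 1)^2 = 0 := by
        linarith [sq_nonneg (f'' y (1, 0) (0, 1)), sq_nonneg (f'' y (1, 0) (1, 0) + 1)]
      have e2 : (f'' y (1, 0) (0, 1))^2 = 0 := by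
        linarith [sq_nonneg (f'' y (1, 0) (0, 1)), sq_nonneg (f'' y (1, 0) (1, 0) + 1)]
      have e1' := pow_eq_zero_iff (n := 2) (by norm_num) |>.1 e1
      have e2' := pow_eq_zero_iff (n := 2) (by norm_num) |>.1 e2
      constructor
      · linarith
      · exact e2'
    -- continuity of the defect
    have hc1 : ContinuousOn (fun y => f'' y (1, 0) (1, 0)) Ω :=
      (ContinuousLinearMap.apply ℝ ℝ ((1 : ℝ), (0 : ℝ))).continuous.comp_continuousOn
        ((ContinuousLinearMap.apply ℝ (ℝ × ℝ →L[ℝ] ℝ)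
          ((1 : ℝ), (0 : ℝ))).continuous.comp_continuousOn hf''cont)
    have hc2 : ContinuousOn (fun y => f'' y (1, 0) (0, 1)) Ω :=
      (ContinuousLinearMap.apply ℝ ℝ ((0 : ℝ), (1 : ℝ))).continuous.comp_continuousOn
        ((ContinuousLinearMap.apply ℝ (ℝ × ℝ →L[ℝ] ℝ)
          ((1 : ℝ), (0 : ℝ))).continuous.comp_continuousOn hf''cont)
    have hhcont : ContinuousOn
        (fun y => (f'' y (1, 0) (1, 0) + 1)^2 + (f'' y (1, 0) (0, 1))^2) Ω :=
      ((hc1.add continuousOn_const).pow 2).add (hc2.pow 2)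
    set U : Set (ℝ × ℝ) :=
      Ω ∩ (fun y => (f'' y (1, 0) (1, 0) + 1)^2 + (f'' y (1, 0) (0, 1))^2) ⁻¹' {(0:ℝ)}ᶜ
      with hUdef
    have hUopen : IsOpen U := hhcont.isOpen_inter_preimage hΩo isOpen_compl_singleton
    have hyU : y ∈ U := ⟨hy, hhy⟩
    have hgrad0 : ∀ z ∈ U, f' z = 0 := by
      intro z hz
      have hzΩ : z ∈ Ω := hz.1
      have hzh : (f'' z (1, 0) (1, 0) + 1)^2 + (f'' z (1, 0) (0, 1))^2 ≠ 0 := hz.2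
      have e1 := hBern z hzΩ (1, 0)
      have e2 := hBern z hzΩ (0, 1)
      have hsy := hsymm z hzΩ (1, 0) (0, 1)
      have hLy := hLap' z hzΩ
      set A := f'' z (1, 0) (1, 0) with hA
      set Bb := f'' z (1, 0) (0, 1) with hBb
      set p := f' z (1, 0) with hp
      set q := f' z (0, 1) with hq
      have e2' : p * Bb - q * (A + 1) = 0 := by
        rw [← hsy] at e2
        have hD2 : f'' z (0, 1) (0, 1) = -2 - A := by linarith
        rw [hD2] at e2
        ring_nf at e2 ⊢
        linarith [e2]
      have e1' : p * (A + 1) + q * Bb = 0 := by ring_nf at e1 ⊢; linarith [e1]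
      have hprod : ((A + 1)^2 + Bb^2) * (p^2 + q^2) = 0 := by
        have hid : ((A + 1)^2 + Bb^2) * (p^2 + q^2)
            = (p * (A + 1) + q * Bb)^2 + (p * Bb - q * (A + 1))^2 := by ring
        rw [hid, e1', e2']
        norm_num
      have h1 : p^2 + q^2 = 0 := by
        rcases mul_eq_zero.1 hprod with h | h
        · exact absurd h hzh
        · exact h
      have hp0 : p = 0 := by
        have hp2 : p^2 = 0 := by linarith [sq_nonneg p, sq_nonneg q]
        exact pow_eq_zero_iff (n := 2) (by norm_num) |>.1 hp2
      have hq0 : q = 0 := by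
        have hq2 : q^2 = 0 := by linarith [sq_nonneg p, sq_nonneg q]
        exact pow_eq_zero_iff (n := 2) (by norm_num) |>.1 hq2
      apply ContinuousLinearMap.ext; intro w
      rw [ContinuousLinearMap.zero_apply, my_clm_decomp (f' z) w, ← hp, ← hq, hp0, hq0]
      simp
    have hf'ev : f' =ᶠ[𝓝 y] fun _ => 0 :=
      eventually_of_mem (hUopen.mem_nhds hyU) fun z hz => hgrad0 z hz
    have h0 : HasFDerivAt f' (0 : ℝ × ℝ →L[ℝ] (ℝ × ℝ →L[ℝ] ℝ)) y :=
      (hasFDerivAt_const (0 : ℝ × ℝ →L[ℝ] ℝ) y).congr_of_eventuallyEq hf'ev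
    have hz0 : f'' y = 0 := (hf'x y hy).unique h0
    have hcontr := hLap' y hy
    rw [hz0] at hcontr
    simp at hcontr
  -- assemble the full bilinear description
  obtain ⟨hA, hBb⟩ := hkey x hx
  have hD : f'' x (0, 1) (0, 1) = -1 := by
    have := hLap' x hx; linarith
  have hB' : f'' x (0, 1) (1, 0) = 0 := by rw [← hsymm x hx]; exact hBb
  rw [my_clm_decomp (f'' x) w]
  simp only [ContinuousLinearMap.add_apply, ContinuousLinearMap.smul_apply, smul_eq_mul]
  rw [my_clm_decomp (f'' x (1, 0)) z, my_clm_decomp (f'' x (0, 1)) z]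
  rw [hA, hBb, hD, hB']
  simp only [smul_eq_mul]
  ring

set_option maxHeartbeats 1000000 in
/-- From the constant second derivative, conclude the quadratic form of F. -/
lemma my_conclude {Ω : Set (ℝ × ℝ)} (hΩo : IsOpen Ω) (hΩc : IsConnected Ω) {F : ℝ × ℝ → ℝ}
    (hdiff : ∀ x ∈ Ω, DifferentiableAt ℝ F x)
    (hf'x : ∀ x ∈ Ω, HasFDerivAt (fderiv ℝ F) (fderiv ℝ (fderiv ℝ F) x) x)
    (hfull : ∀ x ∈ Ω, ∀ w z : ℝ × ℝ,
      fderiv ℝ (fderiv ℝ F) x w z = -(w.1 * z.1 + w.2 * z.2)) :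
    ∃ u v k : ℝ, ∀ x ∈ Ω, F x = -(1/2) * (x.1^2 + x.2^2) + u * x.1 + v * x.2 + k := by
  set f' : ℝ × ℝ → (ℝ × ℝ →L[ℝ] ℝ) := fderiv ℝ F with hf'def
  set M : (ℝ × ℝ) →L[ℝ] ((ℝ × ℝ) →L[ℝ] ℝ) :=
    (ContinuousLinearMap.fst ℝ ℝ ℝ).smulRight (ContinuousLinearMap.fst ℝ ℝ ℝ)
      + (ContinuousLinearMap.snd ℝ ℝ ℝ).smulRight (ContinuousLinearMap.snd ℝ ℝ ℝ) with hMdef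
  have hM : ∀ w z : ℝ × ℝ, M w z = w.1 * z.1 + w.2 * z.2 := by
    intro w z
    rw [hMdef]
    simp [ContinuousLinearMap.smulRight_apply, smul_eq_mul, mul_comm]
  have hG1 : ∀ x ∈ Ω, HasFDerivAt (fun y => f' y + M y)
      (0 : ℝ × ℝ →L[ℝ] (ℝ × ℝ →L[ℝ] ℝ)) x := by
    intro x hx
    have h1 : HasFDerivAt (fun y => f' y + M y) (fderiv ℝ f' x + M) x :=
      (hf'x x hx).add M.hasFDerivAt
    have hMz : fderiv ℝ f' x + M = 0 := by
      apply ContinuousLinearMap.ext; intro w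
      apply ContinuousLinearMap.ext; intro z
      simp only [ContinuousLinearMap.add_apply, ContinuousLinearMap.zero_apply]
      rw [hfull x hx w z, hM w z]; ring
    rwa [hMz] at h1
  obtain ⟨x₀, hx₀⟩ := hΩc.nonempty
  set c : (ℝ × ℝ) →L[ℝ] ℝ := f' x₀ + M x₀ with hcdef
  have hc : ∀ x ∈ Ω, f' x = c - M x := by
    intro x hx
    have := my_const_of_fderiv_zero hΩo hΩc.isPreconnected hG1 hx hx₀
    rw [hcdef, ← this]; abel
  set u : ℝ := c (1, 0) with hudef
  set v : ℝ := c (0, 1) with hvdef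
  have hcw : ∀ w : ℝ × ℝ, c w = w.1 * u + w.2 * v := by
    intro w
    rw [my_clm_decomp c w]; simp [smul_eq_mul, hudef, hvdef]
  set H : ℝ × ℝ → ℝ := fun y => F y + (1/2) * (y.1^2 + y.2^2) - u * y.1 - v * y.2 with hHdef
  have hH : ∀ x ∈ Ω, HasFDerivAt H (0 : ℝ × ℝ →L[ℝ] ℝ) x := by
    intro x hx
    have h1 : HasFDerivAt (fun y : ℝ × ℝ => y.1) (ContinuousLinearMap.fst ℝ ℝ ℝ) x :=
      hasFDerivAt_fst
    have h2 : HasFDerivAt (fun y : ℝ × ℝ => y.2) (ContinuousLinearMap.snd ℝ ℝ ℝ) x :=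
      hasFDerivAt_snd
    have hq : HasFDerivAt (fun y : ℝ × ℝ => (1/2 : ℝ) * (y.1 * y.1 + y.2 * y.2))
        ((1/2 : ℝ) • ((x.1 • ContinuousLinearMap.fst ℝ ℝ ℝ + x.1 • ContinuousLinearMap.fst ℝ ℝ ℝ)
          + (x.2 • ContinuousLinearMap.snd ℝ ℝ ℝ + x.2 • ContinuousLinearMap.snd ℝ ℝ ℝ))) x :=
      ((h1.mul h1).add (h2.mul h2)).const_mul (1/2 : ℝ)
    have htot := (((hdiff x hx).hasFDerivAt.add hq).sub (h1.const_mul u)).sub (h2.const_mul v)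
    have hDz : f' x
        + (1/2 : ℝ) • ((x.1 • ContinuousLinearMap.fst ℝ ℝ ℝ + x.1 • ContinuousLinearMap.fst ℝ ℝ ℝ)
          + (x.2 • ContinuousLinearMap.snd ℝ ℝ ℝ + x.2 • ContinuousLinearMap.snd ℝ ℝ ℝ))
        - u • ContinuousLinearMap.fst ℝ ℝ ℝ - v • ContinuousLinearMap.snd ℝ ℝ ℝ = 0 := by
      apply ContinuousLinearMap.ext; intro w
      have hfx : f' x w = c w - M x w := by rw [hc x hx]; simp
      simp only [ContinuousLinearMap.sub_apply, ContinuousLinearMap.add_apply,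
        ContinuousLinearMap.smul_apply, ContinuousLinearMap.coe_fst',
        ContinuousLinearMap.coe_snd', ContinuousLinearMap.zero_apply, smul_eq_mul]
      rw [hfx, hcw w, hM x w]; ring
    have hHeq : H = fun y : ℝ × ℝ =>
        F y + (1/2 : ℝ) * (y.1 * y.1 + y.2 * y.2) - u * y.1 - v * y.2 := by
      funext y; rw [hHdef]; ring
    rw [hHeq]
    rw [hDz] at htot
    exact htot
  refine ⟨u, v, H x₀, ?_⟩
  intro x hx
  have hconst : H x = H x₀ := my_const_of_fderiv_zero hΩo hΩc.isPreconnected hH hx hx₀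
  have : F x + (1/2) * (x.1^2 + x.2^2) - u * x.1 - v * x.2 = H x₀ := hconst
  linarith

set_option maxHeartbeats 1000000 in
/-- For φ ∈ C²(Ω) on an open connected Ω ⊆ ℝ², the following are
equivalent: (a) Δφ = −2 on Ω and ½|Dφ|² + φ is constant on Ω;
(b) φ(ξ,η) = −½(ξ² + η²) + uξ + vη + k on Ω for some constants u, v, k. -/
theorem constant_density_states_are_uniform
    (Ω : Set (ℝ × ℝ)) (hΩo : IsOpen Ω) (hΩc : IsConnected Ω)
    (φ : ℝ → ℝ → ℝ)
    (hφC2 : ContDiffOn ℝ 2 (fun q : ℝ × ℝ => φ q.1 q.2) Ω) :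
    ((∀ ξ η : ℝ, (ξ, η) ∈ Ω →
        pdxi (pdxi φ) ξ η + pdeta (pdeta φ) ξ η = -2) ∧
     (∃ C : ℝ, ∀ ξ η : ℝ, (ξ, η) ∈ Ω →
        (1/2) * ((pdxi φ ξ η)^2 + (pdeta φ ξ η)^2) + φ ξ η = C))
    ↔
    (∃ u v k : ℝ, ∀ ξ η : ℝ, (ξ, η) ∈ Ω →
        φ ξ η = -(1/2) * (ξ^2 + η^2) + u * ξ + v * η + k) := by
  set F : ℝ × ℝ → ℝ := fun q => φ q.1 q.2 with hFdef
  constructor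
  · rintro ⟨hLap, C, hB⟩
    have hF2 : ∀ x ∈ Ω, ContDiffAt ℝ 2 F x := fun x hx =>
      (hφC2 x hx).contDiffAt (hΩo.mem_nhds hx)
    have hdiff : ∀ x ∈ Ω, DifferentiableAt ℝ F x := fun x hx =>
      (hF2 x hx).differentiableAt two_ne_zero
    set f' : ℝ × ℝ → (ℝ × ℝ →L[ℝ] ℝ) := fderiv ℝ F with hf'def
    have hf'C1 : ContDiffOn ℝ 1 f' Ω :=
      ContDiffOn.fderiv_of_isOpen (m := 1) hφC2 hΩo (by norm_num)
    have hf'd : ∀ x ∈ Ω, DifferentiableAt ℝ f' x := fun x hx =>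
      ((hf'C1 x hx).contDiffAt (hΩo.mem_nhds hx)).differentiableAt one_ne_zero
    set f'' : ℝ × ℝ → (ℝ × ℝ →L[ℝ] (ℝ × ℝ →L[ℝ] ℝ)) := fderiv ℝ f' with hf''def
    have hf'x : ∀ x ∈ Ω, HasFDerivAt f' (f'' x) x := fun x hx => (hf'd x hx).hasFDerivAt
    have hf''cont : ContinuousOn f'' Ω :=
      (ContDiffOn.fderiv_of_isOpen (m := 0) hf'C1 hΩo (by norm_num)).continuousOn
    -- first partials
    have hp1 : ∀ x ∈ Ω, pdxi φ x.1 x.2 = f' x (1, 0) := fun x hx => my_pdxi_eq (hdiff x hx)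
    have hp2 : ∀ x ∈ Ω, pdeta φ x.1 x.2 = f' x (0, 1) := fun x hx => my_pdeta_eq (hdiff x hx)
    -- second partials in terms of f''
    have hpxx : ∀ x ∈ Ω, pdxi (pdxi φ) x.1 x.2 = f'' x (1, 0) (1, 0) := by
      intro x hx
      have heq : (fun s => pdxi φ s x.2) =ᶠ[𝓝 x.1] fun s => f' (s, x.2) (1, 0) := by
        have hcont : Continuous (fun s : ℝ => (s, x.2)) := continuous_id.prodMk continuous_const
        have hm : (x.1, x.2) ∈ Ω := hx
        have : ∀ᶠ s in 𝓝 x.1, (s, x.2) ∈ Ω :=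
          hcont.continuousAt.eventually_mem (hΩo.mem_nhds hm)
        exact this.mono fun s hs => hp1 (s, x.2) hs
      have h1 : HasDerivAt (fun s : ℝ => (s, x.2)) ((1 : ℝ), (0 : ℝ)) x.1 :=
        (hasDerivAt_id x.1).prodMk (hasDerivAt_const x.1 x.2)
      have h2 : HasDerivAt (fun s => f' (s, x.2)) (f'' x (1, 0)) x.1 :=
        (hf'x x hx).comp_hasDerivAt x.1 h1
      have h3 : HasDerivAt (fun s => f' (s, x.2) (1, 0)) (f'' x (1, 0) (1, 0)) x.1 := by
        have := (ContinuousLinearMap.apply ℝ ℝ ((1 : ℝ), (0 : ℝ))).hasFDerivAt.comp_hasDerivAt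
          x.1 h2
        exact this
      show deriv (fun s => pdxi φ s x.2) x.1 = _
      rw [heq.deriv_eq, h3.deriv]
    have hpee : ∀ x ∈ Ω, pdeta (pdeta φ) x.1 x.2 = f'' x (0, 1) (0, 1) := by
      intro x hx
      have heq : (fun s => pdeta φ x.1 s) =ᶠ[𝓝 x.2] fun s => f' (x.1, s) (0, 1) := by
        have hcont : Continuous (fun s : ℝ => (x.1, s)) := continuous_const.prodMk continuous_id
        have hm : (x.1, x.2) ∈ Ω := hx
        have : ∀ᶠ s in 𝓝 x.2, (x.1, s) ∈ Ω :=
          hcont.continuousAt.eventually_mem (hΩo.mem_nhds hm)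
        exact this.mono fun s hs => hp2 (x.1, s) hs
      have h1 : HasDerivAt (fun s : ℝ => (x.1, s)) ((0 : ℝ), (1 : ℝ)) x.2 :=
        (hasDerivAt_const x.2 x.1).prodMk (hasDerivAt_id x.2)
      have h2 : HasDerivAt (fun s => f' (x.1, s)) (f'' x (0, 1)) x.2 :=
        (hf'x x hx).comp_hasDerivAt x.2 h1
      have h3 : HasDerivAt (fun s => f' (x.1, s) (0, 1)) (f'' x (0, 1) (0, 1)) x.2 := by
        have := (ContinuousLinearMap.apply ℝ ℝ ((0 : ℝ), (1 : ℝ))).hasFDerivAt.comp_hasDerivAt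
          x.2 h2
        exact this
      show deriv (fun s => pdeta φ x.1 s) x.2 = _
      rw [heq.deriv_eq, h3.deriv]
    -- Laplace equation in terms of f''
    have hLap' : ∀ x ∈ Ω, f'' x (1, 0) (1, 0) + f'' x (0, 1) (0, 1) = -2 := by
      intro x hx
      rw [← hpxx x hx, ← hpee x hx]
      exact hLap x.1 x.2 hx
    -- Bernoulli in terms of f'
    have hB' : ∀ y ∈ Ω, (1/2 : ℝ) * (f' y (1, 0) * f' y (1, 0)
        + f' y (0, 1) * f' y (0, 1)) + F y = C := by
      intro y hy
      have hBy := hB y.1 y.2 hy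
      rw [hp1 y hy, hp2 y hy, pow_two, pow_two] at hBy
      exact hBy
    have hBern := fun x hx w => my_bern hΩo hdiff hf'x hB' (x := x) hx w
    have hfull := fun x hx w z =>
      my_snd_values hΩo hdiff hf'x hf''cont hLap' hBern (x := x) hx w z
    obtain ⟨u, v, k, huvk⟩ := my_conclude hΩo hΩc hdiff hf'x hfull
    refine ⟨u, v, k, ?_⟩
    intro ξ η hmem
    exact huvk (ξ, η) hmem
  · -- easy direction
    rintro ⟨u, v, k, huvk⟩
    have hpx : ∀ ξ η : ℝ, (ξ, η) ∈ Ω → pdxi φ ξ η = -ξ + u := by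
      intro ξ η hmem
      have hev : (fun s => φ s η) =ᶠ[𝓝 ξ]
          (fun s => -(1/2) * (s^2 + η^2) + u * s + v * η + k) := by
        have hcont : Continuous (fun s : ℝ => (s, η)) := continuous_id.prodMk continuous_const
        have : ∀ᶠ s in 𝓝 ξ, (s, η) ∈ Ω := hcont.continuousAt.eventually_mem (hΩo.mem_nhds hmem)
        exact this.mono fun s hs => huvk s η hs
      have hd : HasDerivAt (fun s : ℝ => -(1/2) * (s^2 + η^2) + u * s + v * η + k)
          (-ξ + u) ξ := by
        have h1 : HasDerivAt (fun s : ℝ => s ^ 2) (2 * ξ) ξ := by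
          simpa using hasDerivAt_pow 2 ξ
        have hu : HasDerivAt (fun s : ℝ => u * s) u ξ := by
          simpa using (hasDerivAt_id ξ).const_mul u
        have := (((h1.add_const (η^2)).const_mul (-(1/2))).add hu).add_const (v * η + k)
        convert this using 1
        all_goals try funext s
        all_goals try rfl
        all_goals (try simp only [Pi.add_apply]); ring
      rw [pdxi, hev.deriv_eq, hd.deriv]
    have hpe : ∀ ξ η : ℝ, (ξ, η) ∈ Ω → pdeta φ ξ η = -η + v := by
      intro ξ η hmem
      have hev : (fun s => φ ξ s) =ᶠ[𝓝 η]
          (fun s => -(1/2) * (ξ^2 + s^2) + u * ξ + v * s + k) := by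
        have hcont : Continuous (fun s : ℝ => (ξ, s)) := continuous_const.prodMk continuous_id
        have : ∀ᶠ s in 𝓝 η, (ξ, s) ∈ Ω := hcont.continuousAt.eventually_mem (hΩo.mem_nhds hmem)
        exact this.mono fun s hs => huvk ξ s hs
      have hd : HasDerivAt (fun s : ℝ => -(1/2) * (ξ^2 + s^2) + u * ξ + v * s + k)
          (-η + v) η := by
        have h1 : HasDerivAt (fun s : ℝ => s ^ 2) (2 * η) η := by
          simpa using hasDerivAt_pow 2 η
        have hv : HasDerivAt (fun s : ℝ => v * s) v η := by
          simpa using (hasDerivAt_id η).const_mul v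
        have := ((((h1.const_add (ξ^2)).const_mul (-(1/2))).add_const (u * ξ)).add
          hv).add_const k
        convert this using 1
        all_goals try funext s
        all_goals try rfl
        all_goals (try simp only [Pi.add_apply]); ring
      rw [pdeta, hev.deriv_eq, hd.deriv]
    constructor
    · intro ξ η hmem
      have hxx : pdxi (pdxi φ) ξ η = -1 := by
        have hev : (fun s => pdxi φ s η) =ᶠ[𝓝 ξ] (fun s => -s + u) := by
          have hcont : Continuous (fun s : ℝ => (s, η)) := continuous_id.prodMk continuous_const
          have : ∀ᶠ s in 𝓝 ξ, (s, η) ∈ Ω := hcont.continuousAt.eventually_mem (hΩo.mem_nhds hmem)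
          exact this.mono fun s hs => hpx s η hs
        have hd : HasDerivAt (fun s : ℝ => -s + u) (-1) ξ := by
          simpa using ((hasDerivAt_id ξ).neg).add_const u
        rw [pdxi, hev.deriv_eq, hd.deriv]
      have hee : pdeta (pdeta φ) ξ η = -1 := by
        have hev : (fun s => pdeta φ ξ s) =ᶠ[𝓝 η] (fun s => -s + v) := by
          have hcont : Continuous (fun s : ℝ => (ξ, s)) := continuous_const.prodMk continuous_id
          have : ∀ᶠ s in 𝓝 η, (ξ, s) ∈ Ω := hcont.continuousAt.eventually_mem (hΩo.mem_nhds hmem)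
          exact this.mono fun s hs => hpe ξ s hs
        have hd : HasDerivAt (fun s : ℝ => -s + v) (-1) η := by
          simpa using ((hasDerivAt_id η).neg).add_const v
        rw [pdeta, hev.deriv_eq, hd.deriv]
      rw [hxx, hee]; norm_num
    · refine ⟨(1/2) * (u^2 + v^2) + k, ?_⟩
      intro ξ η hmem
      rw [hpx ξ η hmem, hpe ξ η hmem, huvk ξ η hmem]
      ring
end

section
/- Let γ > 1 and ρ₀ > 0. For ρ₁ > ρ₀ define u₁(ρ₁) = (ρ₁ − ρ₀) √( 2(ρ₁^{γ−1} − ρ₀^{γ−1}) / (ρ₁² − ρ₀²) ) and c₁(ρ₁) = ρ₁^{(γ−1)/2}. Then there exists a unique ρᶜ > ρ₀ such that u₁(ρ₁) ≤ c₁(ρ₁) for all ρ₁ ∈ (ρ₀, ρᶜ] and u₁(ρ₁) > c₁(ρ₁) for all ρ₁ ∈ (ρᶜ, ∞). -/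
/-- The velocity u₁ of state (1) as a function of ρ₁ (with ρ₀ fixed):
u₁(ρ₁) = (ρ₁ − ρ₀) √(2(ρ₁^(γ−1) − ρ₀^(γ−1))/(ρ₁² − ρ₀²)). -/
noncomputable def uOne (γ ρ₀ ρ₁ : ℝ) : ℝ :=
  (ρ₁ - ρ₀) * Real.sqrt (2 * (ρ₁ ^ (γ - 1) - ρ₀ ^ (γ - 1)) / (ρ₁^2 - ρ₀^2))

/-- The sonic speed of state (1): c₁(ρ₁) = ρ₁^((γ−1)/2). -/
noncomputable def cOne (γ ρ₁ : ℝ) : ℝ := ρ₁ ^ ((γ - 1) / 2)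

/-- The ratio u₁²/c₁² in factored form. -/
noncomputable def Gfun (γ ρ₀ ρ : ℝ) : ℝ :=
  (2 * (ρ - ρ₀) / (ρ + ρ₀)) * (1 - (ρ₀ / ρ) ^ (γ - 1))

lemma cOne_sq (γ ρ : ℝ) (hρ : 0 ≤ ρ) : (cOne γ ρ)^2 = ρ ^ (γ - 1) := by
  unfold cOne
  rw [← Real.rpow_natCast (ρ ^ ((γ-1)/2)) 2, ← Real.rpow_mul hρ]
  norm_num

lemma uOne_sq (γ ρ₀ ρ : ℝ) (hγ : 1 < γ) (hρ₀ : 0 < ρ₀) (hρ : ρ₀ < ρ) :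
    (uOne γ ρ₀ ρ)^2 = Gfun γ ρ₀ ρ * ρ ^ (γ - 1) := by
  have hρpos : 0 < ρ := hρ₀.trans hρ
  have hA : (0:ℝ) < ρ ^ (γ - 1) := Real.rpow_pos_of_pos hρpos _
  have hB : (0:ℝ) < ρ₀ ^ (γ - 1) := Real.rpow_pos_of_pos hρ₀ _
  have hBA : ρ₀ ^ (γ - 1) < ρ ^ (γ - 1) :=
    Real.rpow_lt_rpow hρ₀.le hρ (by linarith)
  have hd : (0:ℝ) < ρ^2 - ρ₀^2 := by nlinarith
  have harg : 0 ≤ 2 * (ρ ^ (γ - 1) - ρ₀ ^ (γ - 1)) / (ρ^2 - ρ₀^2) := by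
    apply div_nonneg (by linarith) hd.le
  unfold uOne Gfun
  rw [mul_pow, Real.sq_sqrt harg, Real.div_rpow hρ₀.le hρpos.le]
  have h1 : ρ - ρ₀ ≠ 0 := by linarith
  have h2 : ρ + ρ₀ ≠ 0 := by positivity
  have h3 : ρ^2 - ρ₀^2 ≠ 0 := ne_of_gt hd
  field_simp
  ring

lemma key_iff (γ ρ₀ ρ : ℝ) (hγ : 1 < γ) (hρ₀ : 0 < ρ₀) (hρ : ρ₀ < ρ) :
    (uOne γ ρ₀ ρ ≤ cOne γ ρ ↔ Gfun γ ρ₀ ρ ≤ 1) ∧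
    (cOne γ ρ < uOne γ ρ₀ ρ ↔ 1 < Gfun γ ρ₀ ρ) := by
  have hρpos : 0 < ρ := hρ₀.trans hρ
  have hA : (0:ℝ) < ρ ^ (γ - 1) := Real.rpow_pos_of_pos hρpos _
  have hc : 0 < cOne γ ρ := Real.rpow_pos_of_pos hρpos _
  have hu : 0 ≤ uOne γ ρ₀ ρ := by
    unfold uOne
    have : 0 ≤ ρ - ρ₀ := by linarith
    positivity
  have hsq : (uOne γ ρ₀ ρ)^2 = Gfun γ ρ₀ ρ * ρ ^ (γ - 1) := uOne_sq γ ρ₀ ρ hγ hρ₀ hρ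
  have hcsq : (cOne γ ρ)^2 = ρ ^ (γ - 1) := cOne_sq γ ρ hρpos.le
  constructor
  · rw [← pow_le_pow_iff_left₀ hu hc.le two_ne_zero, hsq, hcsq]
    constructor
    · intro h; nlinarith
    · intro h; nlinarith
  · rw [← pow_lt_pow_iff_left₀ hc.le hu two_ne_zero, hsq, hcsq]
    constructor
    · intro h; nlinarith
    · intro h; nlinarith

lemma Gfun_strictMono (γ ρ₀ : ℝ) (hγ : 1 < γ) (hρ₀ : 0 < ρ₀) :
    StrictMonoOn (Gfun γ ρ₀) (Set.Ici ρ₀) := by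
  intro a ha b hb hab
  simp only [Set.mem_Ici] at ha hb
  have hapos : 0 < a := lt_of_lt_of_le hρ₀ ha
  have hbpos : 0 < b := lt_of_lt_of_le hρ₀ hb
  have hb0 : ρ₀ < b := lt_of_le_of_lt ha hab
  unfold Gfun
  -- factors at a
  have hf1a : 0 ≤ 2 * (a - ρ₀) / (a + ρ₀) := by
    apply div_nonneg (by linarith) (by linarith)
  have hf2a : 0 ≤ 1 - (ρ₀ / a) ^ (γ - 1) := by
    have : (ρ₀ / a) ^ (γ - 1) ≤ 1 := by
      apply Real.rpow_le_one (by positivity)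
      · exact div_le_one_of_le₀ ha hapos.le
      · linarith
    linarith
  have hf1 : 2 * (a - ρ₀) / (a + ρ₀) < 2 * (b - ρ₀) / (b + ρ₀) := by
    rw [div_lt_div_iff₀ (by linarith) (by linarith)]
    nlinarith
  have hf2 : 1 - (ρ₀ / a) ^ (γ - 1) < 1 - (ρ₀ / b) ^ (γ - 1) := by
    have : (ρ₀ / b) ^ (γ - 1) < (ρ₀ / a) ^ (γ - 1) := by
      apply Real.rpow_lt_rpow (by positivity)
      · rw [div_lt_div_iff₀ hbpos hapos]; nlinarith
      · linarith
    linarith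
  have hf1b : 0 < 2 * (b - ρ₀) / (b + ρ₀) := lt_of_le_of_lt hf1a hf1
  have hf2b : 0 < 1 - (ρ₀ / b) ^ (γ - 1) := lt_of_le_of_lt hf2a hf2
  calc 2 * (a - ρ₀) / (a + ρ₀) * (1 - (ρ₀ / a) ^ (γ - 1))
      ≤ 2 * (a - ρ₀) / (a + ρ₀) * (1 - (ρ₀ / b) ^ (γ - 1)) := by
        apply mul_le_mul_of_nonneg_left hf2.le hf1a
    _ < 2 * (b - ρ₀) / (b + ρ₀) * (1 - (ρ₀ / b) ^ (γ - 1)) := by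
        apply mul_lt_mul_of_pos_right hf1 hf2b

lemma Gfun_continuousOn (γ ρ₀ : ℝ) (hρ₀ : 0 < ρ₀) :
    ContinuousOn (Gfun γ ρ₀) (Set.Ici ρ₀) := by
  unfold Gfun
  apply ContinuousOn.mul
  · apply ContinuousOn.div (by fun_prop) (by fun_prop)
    intro x hx
    simp only [Set.mem_Ici] at hx
    intro h; nlinarith
  · apply ContinuousOn.sub continuousOn_const
    apply ContinuousOn.rpow_const
    · apply ContinuousOn.div continuousOn_const (by fun_prop)
      intro x hx
      simp only [Set.mem_Ici] at hx
      intro h; nlinarith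
    · intro x hx
      left
      simp only [Set.mem_Ici] at hx
      have := div_pos hρ₀ (lt_of_lt_of_le hρ₀ hx)
      intro h; linarith

/-- There is a unique critical density ρᶜ > ρ₀ such that
u₁(ρ₁) ≤ c₁(ρ₁) for ρ₁ ∈ (ρ₀, ρᶜ] and u₁(ρ₁) > c₁(ρ₁) for ρ₁ ∈ (ρᶜ, ∞). -/
theorem critical_density_dichotomy
    (γ ρ₀ : ℝ) (hγ : 1 < γ) (hρ₀ : 0 < ρ₀) :
    ∃! ρc : ℝ, ρ₀ < ρc ∧
      (∀ ρ₁ : ℝ, ρ₀ < ρ₁ → ρ₁ ≤ ρc → uOne γ ρ₀ ρ₁ ≤ cOne γ ρ₁) ∧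
      (∀ ρ₁ : ℝ, ρc < ρ₁ → cOne γ ρ₁ < uOne γ ρ₀ ρ₁) := by
  have hγ1 : (0:ℝ) < γ - 1 := by linarith
  -- choose b with Gfun > 1
  obtain ⟨b, hb5, hbineq⟩ : ∃ b : ℝ, 5 * ρ₀ < b ∧ (ρ₀ / b) ^ (γ - 1) < 1/4 := by
    set t : ℝ := (4:ℝ) ^ ((1:ℝ)/(γ-1))
    have ht1 : (1:ℝ) < t := Real.one_lt_rpow_iff_of_pos (by norm_num) |>.2 (Or.inl ⟨by norm_num, by positivity⟩)
    refine ⟨max (5*ρ₀+1) (ρ₀*t+1), lt_of_lt_of_le (by linarith) (le_max_left _ _), ?_⟩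
    have hbpos : 0 < max (5*ρ₀+1) (ρ₀*t+1) := lt_of_lt_of_le (by linarith) (le_max_left _ _)
    have hbt : ρ₀ * t < max (5*ρ₀+1) (ρ₀*t+1) := lt_of_lt_of_le (by linarith) (le_max_right _ _)
    have hdiv : ρ₀ / max (5*ρ₀+1) (ρ₀*t+1) < 1/t := by
      rw [div_lt_div_iff₀ hbpos (by linarith)]
      nlinarith
    calc (ρ₀ / max (5*ρ₀+1) (ρ₀*t+1)) ^ (γ-1) < (1/t) ^ (γ-1) := by
          apply Real.rpow_lt_rpow (by positivity) hdiv hγ1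
      _ = 1/4 := by
          have h4 : (0:ℝ) ≤ 4 := by norm_num
          have ht : 1/t = (4:ℝ) ^ (-(1/(γ-1))) := by
            rw [Real.rpow_neg h4, one_div]
          rw [ht, ← Real.rpow_mul h4]
          have : -(1/(γ-1)) * (γ-1) = -1 := by field_simp
          rw [this, Real.rpow_neg_one]
          norm_num
  have hGρ₀ : Gfun γ ρ₀ ρ₀ = 0 := by unfold Gfun; simp
  have hbρ₀ : ρ₀ < b := by linarith
  have hGb : 1 < Gfun γ ρ₀ b := by
    unfold Gfun
    have hf1 : (4:ℝ)/3 < 2 * (b - ρ₀) / (b + ρ₀) := by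
      rw [div_lt_div_iff₀ (by norm_num) (by linarith)]
      linarith
    have hf2 : (3:ℝ)/4 < 1 - (ρ₀ / b) ^ (γ - 1) := by linarith
    nlinarith
  obtain ⟨ρc, hρcmem, hρceq⟩ : ∃ ρc ∈ Set.Icc ρ₀ b, Gfun γ ρ₀ ρc = 1 := by
    have := intermediate_value_Icc (le_of_lt hbρ₀)
      ((Gfun_continuousOn γ ρ₀ hρ₀).mono (Set.Icc_subset_Ici_self))
    exact this ⟨by rw [hGρ₀]; norm_num, hGb.le⟩
  have hρcρ₀ : ρ₀ < ρc := by
    rcases eq_or_lt_of_le hρcmem.1 with h | h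
    · exfalso; rw [← h, hGρ₀] at hρceq; norm_num at hρceq
    · exact h
  refine ⟨ρc, ⟨hρcρ₀, ?_, ?_⟩, ?_⟩
  · intro ρ₁ h1 h2
    apply (key_iff γ ρ₀ ρ₁ hγ hρ₀ h1).1.2
    calc Gfun γ ρ₀ ρ₁ ≤ Gfun γ ρ₀ ρc := by
          apply (Gfun_strictMono γ ρ₀ hγ hρ₀).monotoneOn h1.le hρcρ₀.le h2
      _ = 1 := hρceq
  · intro ρ₁ h1
    apply (key_iff γ ρ₀ ρ₁ hγ hρ₀ (hρcρ₀.trans h1)).2.2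
    calc (1:ℝ) = Gfun γ ρ₀ ρc := hρceq.symm
      _ < Gfun γ ρ₀ ρ₁ := Gfun_strictMono γ ρ₀ hγ hρ₀ hρcρ₀.le (hρcρ₀.trans h1).le h1
  · rintro y ⟨hy1, hy2, hy3⟩
    by_contra hne
    rcases lt_or_gt_of_ne hne with h | h
    · -- y < ρc
      have hA := hy3 ρc h
      have hB := (fun ρ₁ h1 h2 => (key_iff γ ρ₀ ρ₁ hγ hρ₀ h1).1.2
        (le_of_le_of_eq ((Gfun_strictMono γ ρ₀ hγ hρ₀).monotoneOn h1.le hρcρ₀.le h2) hρceq))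
        ρc hρcρ₀ le_rfl
      linarith
    · -- ρc < y
      have hA := hy2 y hy1 le_rfl
      have hB : cOne γ y < uOne γ ρ₀ y := by
        apply (key_iff γ ρ₀ y hγ hρ₀ hy1).2.2
        calc (1:ℝ) = Gfun γ ρ₀ ρc := hρceq.symm
          _ < Gfun γ ρ₀ y := Gfun_strictMono γ ρ₀ hγ hρ₀ hρcρ₀.le hy1.le h
      linarith
end

section
/- Let γ > 1 and let Ω ⊆ ℝ² be open and connected. Let φ ∈ C²(Ω), ρ ∈ C¹(Ω, (0,∞)), set (U,V) := Dφ (the pseudo-velocity), and p := ρ^γ/γ. Suppose that on Ω the self-similar mass and momentum equations of the full Euler system hold: (ρU)_ξ + (ρV)_η + 2ρ = 0, (ρU² + p)_ξ + (ρUV)_η + 3ρU = 0, and (ρUV)_ξ + (ρV² + p)_η + 3ρV = 0. Then there exists a constant B ∈ ℝ such that (ρ^{γ−1} − 1)/(γ−1) + ½|Dφ|² + φ = B on Ω; that is, (ρ, φ) satisfies the self-similar potential flow system div(ρDφ) + 2ρ = 0 and (ρ^{γ−1}−1)/(γ−1) + ½|Dφ|² + φ = B. -/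
/-! ### Auxiliary definitions -/

/-- The uncurried version of a function of two real variables. -/
noncomputable def Fq (f : ℝ → ℝ → ℝ) : ℝ × ℝ → ℝ := fun q => f q.1 q.2

/-- First component of the gradient. -/
noncomputable def Uc (φ : ℝ → ℝ → ℝ) : ℝ × ℝ → ℝ :=
  fun q => fderiv ℝ (Fq φ) q (1, 0)

/-- Second component of the gradient. -/
noncomputable def Vc (φ : ℝ → ℝ → ℝ) : ℝ × ℝ → ℝ :=
  fun q => fderiv ℝ (Fq φ) q (0, 1)

/-- The Bernoulli quantity. -/
noncomputable def Gb (γ : ℝ) (φ ρ : ℝ → ℝ → ℝ) : ℝ × ℝ → ℝ :=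
  fun q => ((Fq ρ q) ^ (γ - 1) - 1) / (γ - 1)
    + (1/2) * (Uc φ q * Uc φ q + Vc φ q * Vc φ q) + Fq φ q

/-! ### Slice derivatives -/

lemma sliceX {H : ℝ × ℝ → ℝ} {L : ℝ × ℝ →L[ℝ] ℝ} {ξ η : ℝ}
    (h : HasFDerivAt H L (ξ, η)) :
    HasDerivAt (fun s => H (s, η)) (L (1, 0)) ξ := by
  have hl : HasDerivAt (fun s : ℝ => ((s, η) : ℝ × ℝ)) ((1 : ℝ), (0 : ℝ)) ξ :=
    (hasDerivAt_id ξ).prodMk (hasDerivAt_const ξ η)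
  exact h.comp_hasDerivAt ξ hl

lemma sliceY {H : ℝ × ℝ → ℝ} {L : ℝ × ℝ →L[ℝ] ℝ} {ξ η : ℝ}
    (h : HasFDerivAt H L (ξ, η)) :
    HasDerivAt (fun s => H (ξ, s)) (L (0, 1)) η := by
  have hl : HasDerivAt (fun s : ℝ => ((ξ, s) : ℝ × ℝ)) ((0 : ℝ), (1 : ℝ)) η :=
    (hasDerivAt_const η ξ).prodMk (hasDerivAt_id η)
  exact h.comp_hasDerivAt η hl

lemma pdxi_eq_Uc {φ : ℝ → ℝ → ℝ} {a b : ℝ}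
    (hd : DifferentiableAt ℝ (Fq φ) (a, b)) :
    pdxi φ a b = Uc φ (a, b) :=
  (sliceX hd.hasFDerivAt).deriv

lemma pdeta_eq_Vc {φ : ℝ → ℝ → ℝ} {a b : ℝ}
    (hd : DifferentiableAt ℝ (Fq φ) (a, b)) :
    pdeta φ a b = Vc φ (a, b) :=
  (sliceY hd.hasFDerivAt).deriv

/-- A continuous linear map on `ℝ × ℝ` vanishing on the two basis vectors is zero. -/
lemma clm_zero_of {L : ℝ × ℝ →L[ℝ] ℝ} (h1 : L (1, 0) = 0) (h2 : L (0, 1) = 0) :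
    L = 0 := by
  apply ContinuousLinearMap.ext
  rintro ⟨x, y⟩
  have hxy : ((x, y) : ℝ × ℝ) = x • ((1 : ℝ), (0 : ℝ)) + y • ((0 : ℝ), (1 : ℝ)) := by
    simp [Prod.smul_mk]
  rw [hxy, map_add, map_smul, map_smul, h1, h2]
  simp

/-- A function with vanishing derivative on an open connected set is constant there. -/
lemma exists_const_of_hasFDerivAt_zero {G : ℝ × ℝ → ℝ} {Ω : Set (ℝ × ℝ)}
    (hΩo : IsOpen Ω) (hΩc : IsConnected Ω)
    (hG : ∀ q ∈ Ω, HasFDerivAt G (0 : ℝ × ℝ →L[ℝ] ℝ) q) :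
    ∃ B : ℝ, ∀ q ∈ Ω, G q = B := by
  obtain ⟨q₀, hq₀⟩ := hΩc.nonempty
  haveI := Subtype.preconnectedSpace hΩc.isPreconnected
  have hloc : IsLocallyConstant (fun x : Ω => G x.val) := by
    rw [IsLocallyConstant.iff_exists_open]
    rintro ⟨x, hx⟩
    obtain ⟨ε, hε, hball⟩ := Metric.mem_nhds_iff.1 (hΩo.mem_nhds hx)
    refine ⟨Subtype.val ⁻¹' Metric.ball x ε,
      Metric.isOpen_ball.preimage continuous_subtype_val,
      Set.mem_preimage.2 (Metric.mem_ball_self hε), ?_⟩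
    rintro ⟨y, hy⟩ hyb
    exact (convex_ball x ε).is_const_of_fderivWithin_eq_zero
      (fun z hz => (hG z (hball hz)).differentiableAt.differentiableWithinAt)
      (fun z hz => by
        rw [fderivWithin_of_isOpen Metric.isOpen_ball hz]
        exact (hG z (hball hz)).fderiv)
      hyb (Metric.mem_ball_self hε)
  exact ⟨G q₀, fun q hq => hloc.apply_eq_of_preconnectedSpace ⟨q, hq⟩ ⟨q₀, hq₀⟩⟩

/-- If (U,V) = Dφ (pseudo-velocity of a potential flow) and
p = ρ^γ/γ, and the self-similar mass and momentum equations of the full Euler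
system hold on an open connected Ω, then Bernoulli's law
(ρ^(γ−1) − 1)/(γ−1) + ½|Dφ|² + φ = B holds on Ω for some constant B; that is,
(ρ, φ) solves the self-similar potential flow system. -/
theorem euler_potential_bernoulli
    (γ : ℝ) (hγ : 1 < γ)
    (Ω : Set (ℝ × ℝ)) (hΩo : IsOpen Ω) (hΩc : IsConnected Ω)
    (φ ρ : ℝ → ℝ → ℝ)
    (hφC2 : ContDiffOn ℝ 2 (fun q : ℝ × ℝ => φ q.1 q.2) Ω)
    (hρC1 : ContDiffOn ℝ 1 (fun q : ℝ × ℝ => ρ q.1 q.2) Ω)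
    (hρpos : ∀ ξ η : ℝ, (ξ, η) ∈ Ω → 0 < ρ ξ η)
    -- mass: (ρU)_ξ + (ρV)_η + 2ρ = 0 with U = φ_ξ, V = φ_η
    (hmass : ∀ ξ η : ℝ, (ξ, η) ∈ Ω →
      pdxi (fun a b => ρ a b * pdxi φ a b) ξ η
        + pdeta (fun a b => ρ a b * pdeta φ a b) ξ η + 2 * ρ ξ η = 0)
    -- x-momentum: (ρU² + p)_ξ + (ρUV)_η + 3ρU = 0 with p = ρ^γ/γ
    (hmomx : ∀ ξ η : ℝ, (ξ, η) ∈ Ω →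
      pdxi (fun a b => ρ a b * (pdxi φ a b)^2 + (ρ a b) ^ γ / γ) ξ η
        + pdeta (fun a b => ρ a b * pdxi φ a b * pdeta φ a b) ξ η
        + 3 * (ρ ξ η * pdxi φ ξ η) = 0)
    -- y-momentum: (ρUV)_ξ + (ρV² + p)_η + 3ρV = 0
    (hmomy : ∀ ξ η : ℝ, (ξ, η) ∈ Ω →
      pdxi (fun a b => ρ a b * pdxi φ a b * pdeta φ a b) ξ η
        + pdeta (fun a b => ρ a b * (pdeta φ a b)^2 + (ρ a b) ^ γ / γ) ξ η
        + 3 * (ρ ξ η * pdeta φ ξ η) = 0) :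
    ∃ B : ℝ, ∀ ξ η : ℝ, (ξ, η) ∈ Ω →
      (((ρ ξ η) ^ (γ - 1) - 1) / (γ - 1)
        + (1/2) * ((pdxi φ ξ η)^2 + (pdeta φ ξ η)^2) + φ ξ η = B) ∧
      (pdxi (fun a b => ρ a b * pdxi φ a b) ξ η
        + pdeta (fun a b => ρ a b * pdeta φ a b) ξ η + 2 * ρ ξ η = 0) := by
  have hγ0 : (γ : ℝ) ≠ 0 := by linarith
  have hγ1 : γ - 1 ≠ 0 := by linarith
  -- basic differentiability facts
  have hFC2 : ContDiffOn ℝ 2 (Fq φ) Ω := hφC2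
  have hRC1 : ContDiffOn ℝ 1 (Fq ρ) Ω := hρC1
  have hFd : ∀ q ∈ Ω, DifferentiableAt ℝ (Fq φ) q := fun q hq =>
    (hFC2.differentiableOn (by norm_num)).differentiableAt (hΩo.mem_nhds hq)
  have hRd : ∀ q ∈ Ω, DifferentiableAt ℝ (Fq ρ) q := fun q hq =>
    (hRC1.differentiableOn one_ne_zero).differentiableAt (hΩo.mem_nhds hq)
  have hF'C1 : ContDiffOn ℝ 1 (fderiv ℝ (Fq φ)) Ω :=
    hFC2.fderiv_of_isOpen hΩo (by norm_num)
  have hF'd : ∀ q ∈ Ω, DifferentiableAt ℝ (fderiv ℝ (Fq φ)) q := fun q hq =>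
    (hF'C1.differentiableOn one_ne_zero).differentiableAt (hΩo.mem_nhds hq)
  -- U, V have full derivatives on Ω
  have hU : ∀ q ∈ Ω, HasFDerivAt (Uc φ)
      ((ContinuousLinearMap.apply ℝ ℝ ((1 : ℝ), (0 : ℝ))).comp
        (fderiv ℝ (fderiv ℝ (Fq φ)) q)) q := fun q hq =>
    (ContinuousLinearMap.apply ℝ ℝ ((1 : ℝ), (0 : ℝ))).hasFDerivAt.comp q
      (hF'd q hq).hasFDerivAt
  have hV : ∀ q ∈ Ω, HasFDerivAt (Vc φ)
      ((ContinuousLinearMap.apply ℝ ℝ ((0 : ℝ), (1 : ℝ))).comp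
        (fderiv ℝ (fderiv ℝ (Fq φ)) q)) q := fun q hq =>
    (ContinuousLinearMap.apply ℝ ℝ ((0 : ℝ), (1 : ℝ))).hasFDerivAt.comp q
      (hF'd q hq).hasFDerivAt
  -- the key pointwise computation: the Bernoulli quantity has zero derivative
  have key : ∀ q ∈ Ω, HasFDerivAt (Gb γ φ ρ) (0 : ℝ × ℝ →L[ℝ] ℝ) q := by
    rintro ⟨ξ, η⟩ hq
    set q : ℝ × ℝ := (ξ, η) with hqdef
    set r : ℝ := Fq ρ q with hr
    set u : ℝ := Uc φ q with hu
    set v : ℝ := Vc φ q with hv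
    set rx : ℝ := fderiv ℝ (Fq ρ) q (1, 0) with hrx
    set ry : ℝ := fderiv ℝ (Fq ρ) q (0, 1) with hry
    set f2 : ℝ × ℝ →L[ℝ] ℝ × ℝ →L[ℝ] ℝ := fderiv ℝ (fderiv ℝ (Fq φ)) q with hf2
    set ux : ℝ := f2 (1, 0) (1, 0) with hux
    set uy : ℝ := f2 (0, 1) (1, 0) with huy
    set vx : ℝ := f2 (1, 0) (0, 1) with hvx
    set vy : ℝ := f2 (0, 1) (0, 1) with hvy
    have hrpos : 0 < r := hρpos ξ η hq
    have hrne : r ≠ 0 := ne_of_gt hrpos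
    -- symmetry of second derivatives
    have hsymm : uy = vx := by
      have hev : ∀ᶠ y in nhds q, HasFDerivAt (Fq φ) (fderiv ℝ (Fq φ) y) y := by
        filter_upwards [hΩo.mem_nhds hq] with y hy using (hFd y hy).hasFDerivAt
      exact second_derivative_symmetric_of_eventually hev
        (hF'd q hq).hasFDerivAt (0, 1) (1, 0)
    -- neighborhoods along the coordinate lines
    have hΩx : {s : ℝ | ((s, η) : ℝ × ℝ) ∈ Ω} ∈ nhds ξ := by
      have hc : Continuous fun s : ℝ => ((s, η) : ℝ × ℝ) :=
        continuous_id.prodMk continuous_const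
      exact (hΩo.preimage hc).mem_nhds hq
    have hΩy : {s : ℝ | ((ξ, s) : ℝ × ℝ) ∈ Ω} ∈ nhds η := by
      have hc : Continuous fun s : ℝ => ((ξ, s) : ℝ × ℝ) :=
        continuous_const.prodMk continuous_id
      exact (hΩo.preimage hc).mem_nhds hq
    -- slice derivatives
    have hRx : HasDerivAt (fun s => Fq ρ (s, η)) rx ξ := sliceX (hRd q hq).hasFDerivAt
    have hRy : HasDerivAt (fun s => Fq ρ (ξ, s)) ry η := sliceY (hRd q hq).hasFDerivAt
    have hUx : HasDerivAt (fun s => Uc φ (s, η)) ux ξ := by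
      have h := sliceX (hU q hq)
      simp only [ContinuousLinearMap.comp_apply, ContinuousLinearMap.apply_apply] at h
      rw [hux, hf2]; exact h
    have hUy : HasDerivAt (fun s => Uc φ (ξ, s)) uy η := by
      have h := sliceY (hU q hq)
      simp only [ContinuousLinearMap.comp_apply, ContinuousLinearMap.apply_apply] at h
      rw [huy, hf2]; exact h
    have hVx : HasDerivAt (fun s => Vc φ (s, η)) vx ξ := by
      have h := sliceX (hV q hq)
      simp only [ContinuousLinearMap.comp_apply, ContinuousLinearMap.apply_apply] at h
      rw [hvx, hf2]; exact h
    have hVy : HasDerivAt (fun s => Vc φ (ξ, s)) vy η := by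
      have h := sliceY (hV q hq)
      simp only [ContinuousLinearMap.comp_apply, ContinuousLinearMap.apply_apply] at h
      rw [hvy, hf2]; exact h
    -- rpow derivative
    have hrp : HasDerivAt (fun x : ℝ => x ^ γ) (γ * r ^ (γ - 1)) r :=
      Real.hasDerivAt_rpow_const (Or.inl hrne)
    -- translate the six partial-derivative terms of the hypotheses
    have hA1 : pdxi (fun a b => ρ a b * pdxi φ a b) ξ η = rx * u + r * ux := by
      have h1 : HasDerivAt (fun s => Fq ρ (s, η) * Uc φ (s, η)) (rx * u + r * ux) ξ :=
        hRx.mul hUx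
      have h2 : (fun s => ρ s η * pdxi φ s η)
          =ᶠ[nhds ξ] (fun s => Fq ρ (s, η) * Uc φ (s, η)) := by
        filter_upwards [hΩx] with s hs
        rw [pdxi_eq_Uc (hFd _ hs)]; rfl
      show deriv (fun s => ρ s η * pdxi φ s η) ξ = _
      rw [h2.deriv_eq, h1.deriv]
    have hA2 : pdeta (fun a b => ρ a b * pdeta φ a b) ξ η = ry * v + r * vy := by
      have h1 : HasDerivAt (fun s => Fq ρ (ξ, s) * Vc φ (ξ, s)) (ry * v + r * vy) η :=
        hRy.mul hVy
      have h2 : (fun s => ρ ξ s * pdeta φ ξ s)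
          =ᶠ[nhds η] (fun s => Fq ρ (ξ, s) * Vc φ (ξ, s)) := by
        filter_upwards [hΩy] with s hs
        rw [pdeta_eq_Vc (hFd _ hs)]; rfl
      show deriv (fun s => ρ ξ s * pdeta φ ξ s) η = _
      rw [h2.deriv_eq, h1.deriv]
    have hB1 : pdxi (fun a b => ρ a b * (pdxi φ a b)^2 + (ρ a b) ^ γ / γ) ξ η
        = (rx * u ^ 2 + r * (2 * u * ux)) + r ^ (γ - 1) * rx := by
      have h1 : HasDerivAt
          (fun s => Fq ρ (s, η) * (Uc φ (s, η)) ^ 2 + (Fq ρ (s, η)) ^ γ / γ)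
          ((rx * u ^ 2 + r * ((2 : ℕ) * u ^ (2 - 1) * ux)) + (γ * r ^ (γ - 1) * rx) / γ) ξ :=
        (hRx.mul (hUx.pow 2)).add ((hrp.comp (h := fun s => Fq ρ (s, η)) ξ hRx).div_const γ)
      have h2 : (fun s => ρ s η * (pdxi φ s η) ^ 2 + (ρ s η) ^ γ / γ)
          =ᶠ[nhds ξ] (fun s => Fq ρ (s, η) * (Uc φ (s, η)) ^ 2 + (Fq ρ (s, η)) ^ γ / γ) := by
        filter_upwards [hΩx] with s hs
        rw [pdxi_eq_Uc (hFd _ hs)]; rfl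
      show deriv (fun s => ρ s η * (pdxi φ s η) ^ 2 + (ρ s η) ^ γ / γ) ξ = _
      rw [h2.deriv_eq, h1.deriv]
      push_cast
      field_simp
    have hB2 : pdeta (fun a b => ρ a b * pdxi φ a b * pdeta φ a b) ξ η
        = (ry * u + r * uy) * v + (r * u) * vy := by
      have h1 : HasDerivAt (fun s => Fq ρ (ξ, s) * Uc φ (ξ, s) * Vc φ (ξ, s))
          ((ry * u + r * uy) * v + (r * u) * vy) η := (hRy.mul hUy).mul hVy
      have h2 : (fun s => ρ ξ s * pdxi φ ξ s * pdeta φ ξ s)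
          =ᶠ[nhds η] (fun s => Fq ρ (ξ, s) * Uc φ (ξ, s) * Vc φ (ξ, s)) := by
        filter_upwards [hΩy] with s hs
        rw [pdxi_eq_Uc (hFd _ hs), pdeta_eq_Vc (hFd _ hs)]; rfl
      show deriv (fun s => ρ ξ s * pdxi φ ξ s * pdeta φ ξ s) η = _
      rw [h2.deriv_eq, h1.deriv]
    have hC1 : pdxi (fun a b => ρ a b * pdxi φ a b * pdeta φ a b) ξ η
        = (rx * u + r * ux) * v + (r * u) * vx := by
      have h1 : HasDerivAt (fun s => Fq ρ (s, η) * Uc φ (s, η) * Vc φ (s, η))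
          ((rx * u + r * ux) * v + (r * u) * vx) ξ := (hRx.mul hUx).mul hVx
      have h2 : (fun s => ρ s η * pdxi φ s η * pdeta φ s η)
          =ᶠ[nhds ξ] (fun s => Fq ρ (s, η) * Uc φ (s, η) * Vc φ (s, η)) := by
        filter_upwards [hΩx] with s hs
        rw [pdxi_eq_Uc (hFd _ hs), pdeta_eq_Vc (hFd _ hs)]; rfl
      show deriv (fun s => ρ s η * pdxi φ s η * pdeta φ s η) ξ = _
      rw [h2.deriv_eq, h1.deriv]
    have hC2 : pdeta (fun a b => ρ a b * (pdeta φ a b)^2 + (ρ a b) ^ γ / γ) ξ η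
        = (ry * v ^ 2 + r * (2 * v * vy)) + r ^ (γ - 1) * ry := by
      have h1 : HasDerivAt
          (fun s => Fq ρ (ξ, s) * (Vc φ (ξ, s)) ^ 2 + (Fq ρ (ξ, s)) ^ γ / γ)
          ((ry * v ^ 2 + r * ((2 : ℕ) * v ^ (2 - 1) * vy)) + (γ * r ^ (γ - 1) * ry) / γ) η :=
        (hRy.mul (hVy.pow 2)).add ((hrp.comp (h := fun s => Fq ρ (ξ, s)) η hRy).div_const γ)
      have h2 : (fun s => ρ ξ s * (pdeta φ ξ s) ^ 2 + (ρ ξ s) ^ γ / γ)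
          =ᶠ[nhds η] (fun s => Fq ρ (ξ, s) * (Vc φ (ξ, s)) ^ 2 + (Fq ρ (ξ, s)) ^ γ / γ) := by
        filter_upwards [hΩy] with s hs
        rw [pdeta_eq_Vc (hFd _ hs)]; rfl
      show deriv (fun s => ρ ξ s * (pdeta φ ξ s) ^ 2 + (ρ ξ s) ^ γ / γ) η = _
      rw [h2.deriv_eq, h1.deriv]
      push_cast
      field_simp
    -- the hypotheses as scalar equations
    have hpx : pdxi φ ξ η = u := pdxi_eq_Uc (hFd q hq)
    have hpy : pdeta φ ξ η = v := pdeta_eq_Vc (hFd q hq)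
    have hrρ : ρ ξ η = r := rfl
    have hM : (rx * u + r * ux) + (ry * v + r * vy) + 2 * r = 0 := by
      have h := hmass ξ η hq; rw [hA1, hA2, hrρ] at h; linarith
    have hX : ((rx * u ^ 2 + r * (2 * u * ux)) + r ^ (γ - 1) * rx)
        + ((ry * u + r * uy) * v + (r * u) * vy) + 3 * (r * u) = 0 := by
      have h := hmomx ξ η hq; rw [hB1, hB2, hpx, hrρ] at h; linarith
    have hY : ((rx * u + r * ux) * v + (r * u) * vx)
        + ((ry * v ^ 2 + r * (2 * v * vy)) + r ^ (γ - 1) * ry)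
        + 3 * (r * v) = 0 := by
      have h := hmomy ξ η hq; rw [hC1, hC2, hpy, hrρ] at h; linarith
    -- relation between the rpow powers
    have hP : r ^ (γ - 1) = r * r ^ (γ - 2) := by
      have h : γ - 1 = 1 + (γ - 2) := by ring
      rw [h, Real.rpow_add hrpos, Real.rpow_one]
    -- the two Euler-derived Bernoulli gradient equations
    have hE1 : r ^ (γ - 2) * rx + (u * ux + v * vx) + u = 0 := by
      have h : r * (r ^ (γ - 2) * rx + (u * ux + v * vx) + u) = 0 := by
        rw [← hsymm]
        linear_combination hX - u * hM - rx * hP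
      rcases mul_eq_zero.1 h with h' | h'
      · exact absurd h' hrne
      · exact h'
    have hE2 : r ^ (γ - 2) * ry + (u * uy + v * vy) + v = 0 := by
      have h : r * (r ^ (γ - 2) * ry + (u * uy + v * vy) + v) = 0 := by
        rw [hsymm]
        linear_combination hY - v * hM - ry * hP
      rcases mul_eq_zero.1 h with h' | h'
      · exact absurd h' hrne
      · exact h'
    -- derivative of the Bernoulli function
    have h0 : HasFDerivAt (fun p => (Fq ρ p) ^ (γ - 1))
        (((γ - 1) * r ^ (γ - 1 - 1)) • fderiv ℝ (Fq ρ) q) q :=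
      (Real.hasDerivAt_rpow_const (x := r) (p := γ - 1) (Or.inl hrne)).comp_hasFDerivAt
        (h₂ := fun x : ℝ => x ^ (γ - 1)) q (hRd q hq).hasFDerivAt
    have h1 : HasFDerivAt (fun p => ((Fq ρ p) ^ (γ - 1) - 1) / (γ - 1))
        ((γ - 1)⁻¹ • (((γ - 1) * r ^ (γ - 1 - 1)) • fderiv ℝ (Fq ρ) q)) q := by
      simpa [div_eq_mul_inv] using (h0.sub_const 1).mul_const (γ - 1)⁻¹
    have h2 : HasFDerivAt (fun p => Uc φ p * Uc φ p + Vc φ p * Vc φ p)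
        ((u • ((ContinuousLinearMap.apply ℝ ℝ ((1 : ℝ), (0 : ℝ))).comp f2)
          + u • ((ContinuousLinearMap.apply ℝ ℝ ((1 : ℝ), (0 : ℝ))).comp f2))
         + (v • ((ContinuousLinearMap.apply ℝ ℝ ((0 : ℝ), (1 : ℝ))).comp f2)
          + v • ((ContinuousLinearMap.apply ℝ ℝ ((0 : ℝ), (1 : ℝ))).comp f2))) q :=
      ((hU q hq).mul (hU q hq)).add ((hV q hq).mul (hV q hq))
    have h3 := h2.const_mul (1/2 : ℝ)
    have h4 : HasFDerivAt (Fq φ) (fderiv ℝ (Fq φ) q) q := (hFd q hq).hasFDerivAt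
    have htot := (h1.add h3).add h4
    have hu' : fderiv ℝ (Fq φ) q ((1 : ℝ), (0 : ℝ)) = u := rfl
    have hv' : fderiv ℝ (Fq φ) q ((0 : ℝ), (1 : ℝ)) = v := rfl
    have hzero : ((γ - 1)⁻¹ • (((γ - 1) * r ^ (γ - 1 - 1)) • fderiv ℝ (Fq ρ) q))
        + (1/2 : ℝ) • ((u • ((ContinuousLinearMap.apply ℝ ℝ ((1 : ℝ), (0 : ℝ))).comp f2)
          + u • ((ContinuousLinearMap.apply ℝ ℝ ((1 : ℝ), (0 : ℝ))).comp f2))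
         + (v • ((ContinuousLinearMap.apply ℝ ℝ ((0 : ℝ), (1 : ℝ))).comp f2)
          + v • ((ContinuousLinearMap.apply ℝ ℝ ((0 : ℝ), (1 : ℝ))).comp f2)))
        + fderiv ℝ (Fq φ) q = 0 := by
      apply clm_zero_of
      · simp only [ContinuousLinearMap.add_apply, ContinuousLinearMap.coe_smul',
          Pi.smul_apply, ContinuousLinearMap.comp_apply, ContinuousLinearMap.apply_apply,
          ContinuousLinearMap.smul_apply, smul_eq_mul]
        rw [← hrx, ← hux, ← hvx, hu']
        rw [show γ - 1 - 1 = γ - 2 by ring]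
        linear_combination hE1 + (r ^ (γ - 2) * rx) * inv_mul_cancel₀ hγ1
      · simp only [ContinuousLinearMap.add_apply, ContinuousLinearMap.coe_smul',
          Pi.smul_apply, ContinuousLinearMap.comp_apply, ContinuousLinearMap.apply_apply,
          ContinuousLinearMap.smul_apply, smul_eq_mul]
        rw [← hry, ← huy, ← hvy, hv']
        rw [show γ - 1 - 1 = γ - 2 by ring]
        linear_combination hE2 + (r ^ (γ - 2) * ry) * inv_mul_cancel₀ hγ1
    rw [← hzero]
    exact htot
  obtain ⟨B, hB⟩ := exists_const_of_hasFDerivAt_zero hΩo hΩc key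
  refine ⟨B, fun ξ η hq => ⟨?_, hmass ξ η hq⟩⟩
  have h := hB (ξ, η) hq
  rw [pdxi_eq_Uc (hFd (ξ, η) hq), pdeta_eq_Vc (hFd (ξ, η) hq), ← h]
  unfold Gb Fq
  ring
end
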